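/- arXiv:2503.02203 — 4 statements merged into one kernel-verified Lean document; each statement's English description precedes it below -/
import Mathlib

section
/- Let P be a positive integer, X : ZMod P → ℂ, and define the time-domain signal x : ZMod P → ℂ by x[n] = (1/P) · Σ_{q ∈ ZMod P} X[q] · exp(2πi·q·n/P). Then for every integer k ≥ 0 and every p ∈ ZMod P, the p-th DFT coefficient of the (2k+1)-th parallel-Hammerstein basis satisfies Σ_{n ∈ ZMod P} x[n]^{k+1} · conj(x[n])^{k} · exp(−2πi·p·n/P) = P^{−2k} · Σ_{(q_1,…,q_{2k+1}) ∈ Q_{2k+1}(ZMod P, p)} ∏_{i=1}^{k+1} X[q_i] · ∏_{j=k+2}^{2k+1} conj(X[q_j]). -/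
open Finset Complex

/-- The IMD index set `Q_{2k+1}(D, p)`: tuples `(q_1, …, q_{2k+1}) ∈ D^{2k+1}` such that
`q_1 + ⋯ + q_{k+1} − (q_{k+2} + ⋯ + q_{2k+1}) = p` in `ZMod P`. -/
def imdSet (P : ℕ) [NeZero P] (D : Finset (ZMod P)) (k : ℕ) (p : ZMod P) :
    Finset (Fin (2 * k + 1) → ZMod P) :=
  Finset.univ.filter fun q =>
    (∀ i, q i ∈ D) ∧
      ((∑ i : Fin (2 * k + 1), if (i : ℕ) < k + 1 then q i else 0) -
        ∑ i : Fin (2 * k + 1), if (i : ℕ) < k + 1 then 0 else q i) = p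

/-- `exp(2πi·t/P)` for `t : ZMod P`; well defined since only `t mod P` enters. -/
noncomputable def eChar (P : ℕ) [NeZero P] (t : ZMod P) : ℂ :=
  Complex.exp (2 * Real.pi * Complex.I * (t.val : ℂ) / P)

section aux
variable (P : ℕ) [NeZero P]

noncomputable def zeta (P : ℕ) : ℂ := Complex.exp (2 * Real.pi * Complex.I / P)

lemma zeta_pow_P : zeta P ^ P = 1 := by
  have hP : (P:ℂ) ≠ 0 := Nat.cast_ne_zero.2 (NeZero.ne P)
  rw [zeta, ← Complex.exp_nat_mul]
  rw [show (P:ℂ) * (2 * Real.pi * Complex.I / P) = 2 * Real.pi * Complex.I by field_simp]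
  exact Complex.exp_two_pi_mul_I

lemma zeta_pow_mod (a : ℕ) : zeta P ^ a = zeta P ^ (a % P) := by
  conv_lhs => rw [← Nat.div_add_mod a P]
  rw [pow_add, pow_mul, zeta_pow_P, one_pow, one_mul]

lemma eChar_eq (t : ZMod P) : eChar P t = zeta P ^ t.val := by
  rw [eChar, zeta, ← Complex.exp_nat_mul]
  congr 1
  ring

lemma eChar_mul_val (a b : ZMod P) : eChar P (a * b) = (zeta P ^ a.val) ^ b.val := by
  rw [eChar_eq, ZMod.val_mul, ← zeta_pow_mod, pow_mul]

lemma eChar_add (a b : ZMod P) : eChar P (a + b) = eChar P a * eChar P b := by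
  rw [eChar_eq, eChar_eq, eChar_eq, ZMod.val_add, ← zeta_pow_mod, pow_add]

lemma eChar_zero : eChar P 0 = 1 := by
  simp [eChar_eq, ZMod.val_zero]

lemma conj_eChar (t : ZMod P) : (starRingEnd ℂ) (eChar P t) = eChar P (-t) := by
  have h1 : eChar P (-t) = (eChar P t)⁻¹ :=
    eq_inv_of_mul_eq_one_left (by rw [← eChar_add]; simp [eChar_zero])
  rw [h1, eChar, ← Complex.exp_conj, ← Complex.exp_neg]
  congr 1
  simp only [map_div₀, map_mul, Complex.conj_I, map_ofNat, Complex.conj_ofReal, map_natCast]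
  ring

lemma eChar_sum {ι : Type*} (s : Finset ι) (f : ι → ZMod P) :
    eChar P (∑ i ∈ s, f i) = ∏ i ∈ s, eChar P (f i) := by
  induction s using Finset.cons_induction with
  | empty => simp [eChar_zero]
  | cons a s ha ih => rw [Finset.sum_cons, Finset.prod_cons, eChar_add, ih]

lemma sum_eChar (t : ZMod P) :
    ∑ n : ZMod P, eChar P (t * n) = if t = 0 then (P : ℂ) else 0 := by
  split
  · next h =>
    subst h
    simp [eChar_zero, ZMod.card]
  · next h =>
    have hprim : IsPrimitiveRoot (zeta P) P := Complex.isPrimitiveRoot_exp P (NeZero.ne P)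
    have hw : zeta P ^ t.val ≠ 1 :=
      hprim.pow_ne_one_of_pos_of_lt (ZMod.val_pos.2 h).ne' (ZMod.val_lt t)
    calc ∑ n : ZMod P, eChar P (t * n) = ∑ n : ZMod P, (zeta P ^ t.val) ^ n.val := by
          simp [eChar_mul_val]
      _ = ∑ i ∈ Finset.range P, (zeta P ^ t.val) ^ i := by
          refine Finset.sum_nbij' (fun n => n.val) (fun i => (i : ZMod P)) ?_ ?_ ?_ ?_ ?_
          · intro a _; simp [ZMod.val_lt]
          · intro a _; simp
          · intro a _; simp [ZMod.natCast_val, ZMod.cast_id]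
          · intro a ha; exact ZMod.val_cast_of_lt (Finset.mem_range.1 ha)
          · intro a _; rfl
      _ = ((zeta P ^ t.val) ^ P - 1) / (zeta P ^ t.val - 1) := geom_sum_eq hw P
      _ = 0 := by
          rw [← pow_mul, mul_comm, pow_mul, zeta_pow_P, one_pow]
          simp

lemma card_filter_lt (n m : ℕ) :
    ((Finset.univ : Finset (Fin n)).filter fun i : Fin n => (i : ℕ) < m).card = min m n := by
  rw [Finset.card_filter, Fin.sum_univ_eq_sum_range (fun i => if i < m then (1:ℕ) else 0),
    ← Finset.card_filter]
  have : (Finset.range n).filter (· < m) = Finset.range (min m n) := by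
    ext a; simp only [Finset.mem_filter, Finset.mem_range, lt_min_iff]; omega
  rw [this, Finset.card_range]

lemma card_filter_not_lt (n m : ℕ) :
    ((Finset.univ : Finset (Fin n)).filter fun i : Fin n => ¬ (i : ℕ) < m).card = n - m := by
  rw [Finset.card_filter, Fin.sum_univ_eq_sum_range (fun i => if ¬ i < m then (1:ℕ) else 0),
    ← Finset.card_filter]
  have : (Finset.range n).filter (fun i => ¬ i < m) = Finset.Ico m n := by
    ext a; simp only [Finset.mem_filter, Finset.mem_range, Finset.mem_Ico]; omega
  rw [this, Nat.card_Ico]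
end aux

/-- DFT of the `(2k+1)`-th parallel-Hammerstein basis: if
`x[n] = (1/P) Σ_q X[q] exp(2πi·q·n/P)`, then for all `k ≥ 0` and `p`,
`Σ_n x[n]^{k+1} conj(x[n])^k exp(−2πi·p·n/P)
  = P^{−2k} Σ_{(q_1,…,q_{2k+1}) ∈ Q_{2k+1}(ZMod P, p)} ∏_{i≤k+1} X[q_i] ∏_{j>k+1} conj(X[q_j])`. -/
theorem dft_parallelHammerstein_basis (P : ℕ) [NeZero P] (X : ZMod P → ℂ)
    (x : ZMod P → ℂ)
    (hx : ∀ n : ZMod P, x n = (1 / (P : ℂ)) * ∑ q : ZMod P, X q * eChar P (q * n))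
    (k : ℕ) (p : ZMod P) :
    ∑ n : ZMod P, (x n) ^ (k + 1) * ((starRingEnd ℂ) (x n)) ^ k *
        (starRingEnd ℂ) (eChar P (p * n)) =
      ((P : ℂ) ^ (2 * k))⁻¹ *
        ∑ q ∈ imdSet P Finset.univ k p, ∏ i : Fin (2 * k + 1),
          if (i : ℕ) < k + 1 then X (q i) else (starRingEnd ℂ) (X (q i)) := by
  classical
  have hP : (P:ℂ) ≠ 0 := Nat.cast_ne_zero.2 (NeZero.ne P)
  set S : (Fin (2*k+1) → ZMod P) → ZMod P := fun q =>
    (∑ i : Fin (2*k+1), if (i:ℕ) < k+1 then q i else 0) -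
      ∑ i : Fin (2*k+1), if (i:ℕ) < k+1 then 0 else q i with hS
  set T : (Fin (2*k+1) → ZMod P) → ℂ := fun q =>
    ∏ i : Fin (2*k+1), if (i:ℕ) < k+1 then X (q i) else (starRingEnd ℂ) (X (q i)) with hT
  have key : ∀ n : ZMod P, x n ^ (k+1) * (starRingEnd ℂ) (x n) ^ k =
      ((P:ℂ) ^ (2*k+1))⁻¹ * ∑ q : Fin (2*k+1) → ZMod P, T q * eChar P (S q * n) := by
    intro n
    have hxP : ∑ c : ZMod P, X c * eChar P (c * n) = (P:ℂ) * x n := by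
      rw [hx n]; field_simp
    have hxC : ∑ c : ZMod P, (starRingEnd ℂ) (X c) * eChar P (-c * n) =
        (P:ℂ) * (starRingEnd ℂ) (x n) := by
      have h := congrArg (starRingEnd ℂ) hxP
      simpa [map_sum, conj_eChar, neg_mul] using h
    set F : Fin (2*k+1) → ZMod P → ℂ := fun i c =>
      if (i:ℕ) < k+1 then X c * eChar P (c * n) else (starRingEnd ℂ) (X c) * eChar P (-c * n)
      with hF
    have h1 : ∏ i : Fin (2*k+1), (∑ c : ZMod P, F i c) =
        ((P:ℂ) * x n) ^ (k+1) * ((P:ℂ) * (starRingEnd ℂ) (x n)) ^ k := by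
      have h2 : ∀ i : Fin (2*k+1), (∑ c : ZMod P, F i c) =
          if (i:ℕ) < k+1 then (P:ℂ) * x n else (P:ℂ) * (starRingEnd ℂ) (x n) := by
        intro i
        by_cases hi : (i:ℕ) < k+1 <;> simp only [hF, hi, if_true, if_false]
        · exact hxP
        · exact hxC
      rw [Finset.prod_congr rfl (fun i _ => h2 i), Finset.prod_ite, Finset.prod_const,
        Finset.prod_const, card_filter_lt, card_filter_not_lt]
      have e1 : min (k+1) (2*k+1) = k+1 := by omega
      have e2 : 2*k+1 - (k+1) = k := by omega
      rw [e1, e2]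
    have h3 : ∏ i : Fin (2*k+1), (∑ c : ZMod P, F i c) =
        ∑ q : Fin (2*k+1) → ZMod P, ∏ i, F i (q i) := by
      rw [Finset.prod_univ_sum, Fintype.piFinset_univ]
    have h4 : ∀ q : Fin (2*k+1) → ZMod P, ∏ i, F i (q i) = T q * eChar P (S q * n) := by
      intro q
      have e1 : ∀ i : Fin (2*k+1), F i (q i) =
          (if (i:ℕ) < k+1 then X (q i) else (starRingEnd ℂ) (X (q i))) *
            eChar P ((if (i:ℕ) < k+1 then q i else - q i) * n) := by
        intro i; by_cases hi : (i:ℕ) < k+1 <;> simp only [hF, hi, if_true, if_false]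
      rw [Finset.prod_congr rfl (fun i _ => e1 i), Finset.prod_mul_distrib]
      congr 1
      rw [← eChar_sum, ← Finset.sum_mul]
      congr 2
      show (∑ i : Fin (2*k+1), if (i:ℕ) < k+1 then q i else -q i) =
        (∑ i : Fin (2*k+1), if (i:ℕ) < k+1 then q i else 0) -
          ∑ i : Fin (2*k+1), if (i:ℕ) < k+1 then 0 else q i
      rw [← Finset.sum_sub_distrib]
      exact Finset.sum_congr rfl fun i _ => by split <;> simp
    rw [Finset.sum_congr rfl (fun q _ => (h4 q).symm), ← h3, h1]
    field_simp
    ring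
  have step : ∀ q, ∑ n : ZMod P, eChar P (S q * n) * (starRingEnd ℂ) (eChar P (p * n)) =
      if S q = p then (P:ℂ) else 0 := by
    intro q
    have e : ∀ n : ZMod P, eChar P (S q * n) * (starRingEnd ℂ) (eChar P (p * n)) =
        eChar P ((S q - p) * n) := by
      intro n
      rw [conj_eChar, ← eChar_add]
      congr 1
      ring
    rw [Finset.sum_congr rfl fun n _ => e n, sum_eChar]
    simp [sub_eq_zero]
  calc ∑ n : ZMod P, x n ^ (k + 1) * (starRingEnd ℂ) (x n) ^ k *
        (starRingEnd ℂ) (eChar P (p * n))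
      = ∑ n : ZMod P, ((P:ℂ)^(2*k+1))⁻¹ * ∑ q : Fin (2*k+1) → ZMod P,
          T q * (eChar P (S q * n) * (starRingEnd ℂ) (eChar P (p * n))) := by
        refine Finset.sum_congr rfl fun n _ => ?_
        rw [key n, mul_assoc, Finset.sum_mul]
        congr 1
        exact Finset.sum_congr rfl fun q _ => by ring
    _ = ((P:ℂ)^(2*k+1))⁻¹ * ∑ q : Fin (2*k+1) → ZMod P,
          T q * ∑ n : ZMod P, eChar P (S q * n) * (starRingEnd ℂ) (eChar P (p * n)) := by
        rw [← Finset.mul_sum, Finset.sum_comm]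
        congr 1
        exact Finset.sum_congr rfl fun q _ => (Finset.mul_sum _ _ _).symm
    _ = ((P:ℂ)^(2*k+1))⁻¹ * ∑ q : Fin (2*k+1) → ZMod P,
          T q * (if S q = p then (P:ℂ) else 0) := by
        congr 1
        exact Finset.sum_congr rfl fun q _ => by rw [step q]
    _ = ((P:ℂ)^(2*k+1))⁻¹ * ((∑ q ∈ Finset.univ.filter fun q => S q = p, T q) * (P:ℂ)) := by
        congr 1
        have e : ∀ q : Fin (2*k+1) → ZMod P,
            T q * (if S q = p then (P:ℂ) else 0) = if S q = p then T q * P else 0 :=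
          fun q => by split <;> simp
        rw [Finset.sum_congr rfl fun q _ => e q, ← Finset.sum_filter, ← Finset.sum_mul]
    _ = ((P:ℂ)^(2*k))⁻¹ * ∑ q ∈ imdSet P Finset.univ k p, T q := by
        have him : imdSet P Finset.univ k p = Finset.univ.filter fun q => S q = p := by
          ext q
          simp [imdSet, hS]
        rw [him]
        field_simp
        ring
end

section
/- (Lemma 1, first recursion.) Let P be a positive integer, D ⊆ ZMod P, X : ZMod P → ℂ, and for k ≥ 0 define S_{2k+1}[p] = Σ_{(q_1,…,q_{2k+1}) ∈ Q_{2k+1}(D,p)} ∏_{i=1}^{k+1} X[q_i] · ∏_{j=k+2}^{2k+1} conj(X[q_j]). Then for every integer k ≥ 1 and every p ∈ ZMod P, S_{2k+1}[p] = Σ_{q_1 ∈ D} Σ_{q_2 ∈ D} X[q_1] · X[q_2] · conj( S_{2k−1}[q_1 + q_2 − p] ). -/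
open Finset Complex

/-- The `(2k+1)`-th IMD nonlinear basis
`S_{2k+1}[p] = Σ_{(q_1,…,q_{2k+1}) ∈ Q_{2k+1}(D,p)} ∏_{i=1}^{k+1} X[q_i] ∏_{j=k+2}^{2k+1} conj(X[q_j])`. -/
noncomputable def imdBasis (P : ℕ) [NeZero P] (D : Finset (ZMod P)) (X : ZMod P → ℂ)
    (k : ℕ) (p : ZMod P) : ℂ :=
  ∑ q ∈ imdSet P D k p, ∏ i : Fin (2 * k + 1),
    if (i : ℕ) < k + 1 then X (q i) else (starRingEnd ℂ) (X (q i))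

/-! ### Auxiliary machinery -/

/-- Extend a `Fin n`-indexed family to `ℕ` with default value `d`. -/
def extd {β : Type*} (d : β) {n : ℕ} (v : Fin n → β) : ℕ → β :=
  fun i => if h : i < n then v ⟨i, h⟩ else d

lemma extd_apply {β : Type*} (d : β) {n : ℕ} (v : Fin n → β) {i : ℕ} (h : i < n) :
    extd d v i = v ⟨i, h⟩ := dif_pos h

lemma extd_coe {β : Type*} (d : β) {n : ℕ} (v : Fin n → β) (i : Fin n) :
    extd d v (i : ℕ) = v i := by
  rw [extd_apply d v i.isLt]

lemma extd_const {β : Type*} (d : β) {n : ℕ} (i : ℕ) :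
    extd d (fun _ : Fin n => d) i = d := by
  unfold extd; split <;> rfl

lemma range_if_split_prod {γ : Type*} [CommMonoid γ] (a b : ℕ) (F G : ℕ → γ) :
    (∏ i ∈ range (a + b), if i < a then F i else G i)
      = (∏ i ∈ range a, F i) * ∏ i ∈ range b, G (a + i) := by
  rw [Finset.prod_range_add]
  congr 1
  · exact Finset.prod_congr rfl fun i hi => if_pos (Finset.mem_range.1 hi)
  · exact Finset.prod_congr rfl fun i _ => if_neg (by omega)

lemma range_if_split_sum {γ : Type*} [AddCommMonoid γ] (a b : ℕ) (F G : ℕ → γ) :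
    (∑ i ∈ range (a + b), if i < a then F i else G i)
      = (∑ i ∈ range a, F i) + ∑ i ∈ range b, G (a + i) := by
  rw [Finset.sum_range_add]
  congr 1
  · exact Finset.sum_congr rfl fun i hi => if_pos (Finset.mem_range.1 hi)
  · exact Finset.sum_congr rfl fun i _ => if_neg (by omega)

lemma finIf_split_prod {γ : Type*} [CommMonoid γ] (m : ℕ) (F G : Fin (2*(m+1)+1) → γ) :
    (∏ i : Fin (2*(m+1)+1), if (i : ℕ) < m+1+1 then F i else G i)
      = ((extd 1 F 0 * extd 1 F 1) * ∏ i ∈ range m, extd 1 F (2+i))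
        * ∏ i ∈ range (m+1), extd 1 G (m+1+1+i) := by
  have h1 : (∏ i : Fin (2*(m+1)+1), if (i : ℕ) < m+1+1 then F i else G i)
      = ∏ i ∈ range (2*(m+1)+1), (if i < m+1+1 then extd 1 F i else extd 1 G i) := by
    rw [← Fin.prod_univ_eq_prod_range (fun i => if i < m+1+1 then extd 1 F i else extd 1 G i)]
    exact Finset.prod_congr rfl fun i _ => by simp [extd_coe]
  rw [h1, show range (2*(m+1)+1) = range ((m+1+1)+(m+1)) from by congr 1; ring,
    range_if_split_prod]
  congr 1
  rw [show range (m+1+1) = range (2+m) from by congr 1; ring, Finset.prod_range_add]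
  congr 1
  simp [Finset.prod_range_succ]

lemma finIf_split_sum {γ : Type*} [AddCommMonoid γ] (m : ℕ) (F G : Fin (2*(m+1)+1) → γ) :
    (∑ i : Fin (2*(m+1)+1), if (i : ℕ) < m+1+1 then F i else G i)
      = ((extd 0 F 0 + extd 0 F 1) + ∑ i ∈ range m, extd 0 F (2+i))
        + ∑ i ∈ range (m+1), extd 0 G (m+1+1+i) := by
  have h1 : (∑ i : Fin (2*(m+1)+1), if (i : ℕ) < m+1+1 then F i else G i)
      = ∑ i ∈ range (2*(m+1)+1), (if i < m+1+1 then extd 0 F i else extd 0 G i) := by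
    rw [← Fin.sum_univ_eq_sum_range (fun i => if i < m+1+1 then extd 0 F i else extd 0 G i)]
    exact Finset.sum_congr rfl fun i _ => by simp [extd_coe]
  rw [h1, show range (2*(m+1)+1) = range ((m+1+1)+(m+1)) from by congr 1; ring,
    range_if_split_sum]
  congr 1
  rw [show range (m+1+1) = range (2+m) from by congr 1; ring, Finset.sum_range_add]
  congr 1
  simp [Finset.sum_range_succ]

lemma finIf_split'_prod {γ : Type*} [CommMonoid γ] (m : ℕ) (F G : Fin (2*m+1) → γ) :
    (∏ j : Fin (2*m+1), if (j : ℕ) < m+1 then F j else G j)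
      = (∏ j ∈ range (m+1), extd 1 F j) * ∏ j ∈ range m, extd 1 G (m+1+j) := by
  have h1 : (∏ j : Fin (2*m+1), if (j : ℕ) < m+1 then F j else G j)
      = ∏ j ∈ range (2*m+1), (if j < m+1 then extd 1 F j else extd 1 G j) := by
    rw [← Fin.prod_univ_eq_prod_range (fun j => if j < m+1 then extd 1 F j else extd 1 G j)]
    exact Finset.prod_congr rfl fun j _ => by simp [extd_coe]
  rw [h1, show range (2*m+1) = range ((m+1)+m) from by congr 1; ring, range_if_split_prod]

lemma finIf_split'_sum {γ : Type*} [AddCommMonoid γ] (m : ℕ) (F G : Fin (2*m+1) → γ) :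
    (∑ j : Fin (2*m+1), if (j : ℕ) < m+1 then F j else G j)
      = (∑ j ∈ range (m+1), extd 0 F j) + ∑ j ∈ range m, extd 0 G (m+1+j) := by
  have h1 : (∑ j : Fin (2*m+1), if (j : ℕ) < m+1 then F j else G j)
      = ∑ j ∈ range (2*m+1), (if j < m+1 then extd 0 F j else extd 0 G j) := by
    rw [← Fin.sum_univ_eq_sum_range (fun j => if j < m+1 then extd 0 F j else extd 0 G j)]
    exact Finset.sum_congr rfl fun j _ => by simp [extd_coe]
  rw [h1, show range (2*m+1) = range ((m+1)+m) from by congr 1; ring, range_if_split_sum]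

/-- The forward reindexing: strip the first two "plus" slots. -/
def fwdT (m : ℕ) {β : Type*} [Zero β] (q : Fin (2*(m+1)+1) → β) : Fin (2*m+1) → β :=
  fun j => extd 0 q (if (j : ℕ) < m+1 then m+1+1+(j : ℕ) else 2+((j : ℕ)-(m+1)))

/-- The backward reindexing. -/
def bwdQ (m : ℕ) {β : Type*} [Zero β] (a b : β) (t : Fin (2*m+1) → β) :
    Fin (2*(m+1)+1) → β :=
  fun i => if (i : ℕ) = 0 then a else if (i : ℕ) = 1 then b
    else if (i : ℕ) < m+1+1 then extd 0 t (m+1+((i : ℕ)-2)) else extd 0 t ((i : ℕ)-(m+1+1))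

lemma fwdT_coe (m : ℕ) {β : Type*} [Zero β] (q : Fin (2*(m+1)+1) → β) (j : Fin (2*m+1)) :
    fwdT m q j = extd 0 q (if (j : ℕ) < m+1 then m+1+1+(j : ℕ) else 2+((j : ℕ)-(m+1))) := rfl

lemma bwdQ_coe (m : ℕ) {β : Type*} [Zero β] (a b : β) (t : Fin (2*m+1) → β)
    (i : Fin (2*(m+1)+1)) :
    bwdQ m a b t i = if (i : ℕ) = 0 then a else if (i : ℕ) = 1 then b
      else if (i : ℕ) < m+1+1 then extd 0 t (m+1+((i : ℕ)-2))
      else extd 0 t ((i : ℕ)-(m+1+1)) := rfl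

lemma bwd_fwd (m : ℕ) {β : Type*} [Zero β] (q : Fin (2*(m+1)+1) → β) :
    bwdQ m (extd 0 q 0) (extd 0 q 1) (fwdT m q) = q := by
  funext i
  have hi := i.isLt
  rw [← extd_coe 0 q i, bwdQ_coe]
  split_ifs with h0 h1 h2
  · rw [h0]
  · rw [h1]
  · rw [extd_apply _ _ (show m+1+((i:ℕ)-2) < 2*m+1 by omega), fwdT_coe]
    simp only [Fin.val_mk]
    rw [if_neg (by omega : ¬ m+1+((i:ℕ)-2) < m+1)]
    congr 1
    omega
  · rw [extd_apply _ _ (show (i:ℕ)-(m+1+1) < 2*m+1 by omega), fwdT_coe]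
    simp only [Fin.val_mk]
    rw [if_pos (by omega : (i:ℕ)-(m+1+1) < m+1)]
    congr 1
    omega

lemma fwd_bwd (m : ℕ) {β : Type*} [Zero β] (a b : β) (t : Fin (2*m+1) → β) :
    fwdT m (bwdQ m a b t) = t := by
  funext j
  have hj := j.isLt
  rw [← extd_coe 0 t j, fwdT_coe]
  by_cases h : (j : ℕ) < m+1
  · rw [if_pos h, extd_apply _ _ (show m+1+1+(j:ℕ) < 2*(m+1)+1 by omega), bwdQ_coe]
    simp only [Fin.val_mk]
    rw [if_neg (by omega), if_neg (by omega), if_neg (by omega)]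
    congr 1
    omega
  · rw [if_neg h, extd_apply _ _ (show 2+((j:ℕ)-(m+1)) < 2*(m+1)+1 by omega), bwdQ_coe]
    simp only [Fin.val_mk]
    rw [if_neg (by omega), if_neg (by omega), if_pos (by omega)]
    congr 1
    omega

lemma bwd_zero (m : ℕ) {β : Type*} [Zero β] (a b : β) (t : Fin (2*m+1) → β) :
    extd 0 (bwdQ m a b t) 0 = a := by
  rw [extd_apply _ _ (show 0 < 2*(m+1)+1 by omega)]
  rfl

lemma bwd_one (m : ℕ) {β : Type*} [Zero β] (a b : β) (t : Fin (2*m+1) → β) :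
    extd 0 (bwdQ m a b t) 1 = b := by
  rw [extd_apply _ _ (show 1 < 2*(m+1)+1 by omega)]
  rfl

/-- Lemma 1, first recursion:
`S_{2k+1}[p] = Σ_{q₁,q₂ ∈ D} X[q₁] X[q₂] conj(S_{2k−1}[q₁ + q₂ − p])` for `k ≥ 1`. -/
theorem imdBasis_recursion_first (P : ℕ) [NeZero P] (D : Finset (ZMod P))
    (X : ZMod P → ℂ) (k : ℕ) (hk : 1 ≤ k) (p : ZMod P) :
    imdBasis P D X k p =
      ∑ q₁ ∈ D, ∑ q₂ ∈ D,
        X q₁ * X q₂ * (starRingEnd ℂ) (imdBasis P D X (k - 1) (q₁ + q₂ - p)) := by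
  obtain ⟨m, rfl⟩ : ∃ m, k = m + 1 := ⟨k - 1, by omega⟩
  have hconj : ∀ r : ZMod P, (starRingEnd ℂ) (imdBasis P D X m r) =
      ∑ t ∈ imdSet P D m r, ∏ j : Fin (2*m+1),
        if (j : ℕ) < m+1 then (starRingEnd ℂ) (X (t j)) else X (t j) := by
    intro r
    rw [imdBasis, map_sum]
    refine Finset.sum_congr rfl fun t _ => ?_
    rw [map_prod]
    refine Finset.prod_congr rfl fun j _ => ?_
    split <;> simp
  have hrw : ∀ q₁ q₂ : ZMod P,
      X q₁ * X q₂ * (starRingEnd ℂ) (imdBasis P D X m (q₁+q₂-p))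
        = ∑ t ∈ imdSet P D m (q₁+q₂-p),
            X q₁ * X q₂ * ∏ j : Fin (2*m+1),
              if (j : ℕ) < m+1 then (starRingEnd ℂ) (X (t j)) else X (t j) := by
    intro q₁ q₂
    rw [hconj, Finset.mul_sum]
  simp only [Nat.add_sub_cancel, hrw]
  have hsig : ∑ x ∈ (D.sigma fun q₁ => (D.sigma fun q₂ => imdSet P D m (q₁+q₂-p))),
      (X x.1 * X x.2.1 * ∏ j : Fin (2*m+1),
        if (j : ℕ) < m+1 then (starRingEnd ℂ) (X (x.2.2 j)) else X (x.2.2 j))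
      = ∑ q₁ ∈ D, ∑ q₂ ∈ D, ∑ t ∈ imdSet P D m (q₁+q₂-p),
          (X q₁ * X q₂ * ∏ j : Fin (2*m+1),
            if (j : ℕ) < m+1 then (starRingEnd ℂ) (X (t j)) else X (t j)) := by
    rw [Finset.sum_sigma]
    exact Finset.sum_congr rfl fun q₁ _ => Finset.sum_sigma _ _ _
  rw [← hsig, imdBasis]
  refine Finset.sum_nbij' (fun q => ⟨extd 0 q 0, extd 0 q 1, fwdT m q⟩)
    (fun x => bwdQ m x.1 x.2.1 x.2.2) ?_ ?_ ?_ ?_ ?_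
  · -- forward membership
    intro q hq
    simp only [imdSet, Finset.mem_filter, Finset.mem_univ, true_and] at hq
    obtain ⟨hD, hsum⟩ := hq
    rw [finIf_split_sum, finIf_split_sum] at hsum
    simp only [extd_const, Finset.sum_const_zero, add_zero, zero_add] at hsum
    simp only [Finset.mem_sigma]
    refine ⟨?_, ?_, ?_⟩
    · rw [extd_apply _ _ (show 0 < 2*(m+1)+1 by omega)]; exact hD _
    · rw [extd_apply _ _ (show 1 < 2*(m+1)+1 by omega)]; exact hD _
    · simp only [imdSet, Finset.mem_filter, Finset.mem_univ, true_and]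
      constructor
      · intro j
        have hj := j.isLt
        rw [fwdT_coe]
        by_cases h : (j : ℕ) < m+1
        · rw [if_pos h, extd_apply _ _ (by omega : m+1+1+(j:ℕ) < 2*(m+1)+1)]; exact hD _
        · rw [if_neg h, extd_apply _ _ (by omega : 2+((j:ℕ)-(m+1)) < 2*(m+1)+1)]; exact hD _
      · rw [finIf_split'_sum, finIf_split'_sum]
        simp only [extd_const, Finset.sum_const_zero, add_zero, zero_add]
        have e1 : ∑ j ∈ range (m+1), extd 0 (fwdT m q) j
            = ∑ j ∈ range (m+1), extd 0 q (m+1+1+j) := by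
          refine Finset.sum_congr rfl fun j hj => ?_
          have hj' := Finset.mem_range.1 hj
          rw [extd_apply _ _ (show j < 2*m+1 by omega), fwdT_coe]
          simp only [Fin.val_mk]
          rw [if_pos (by omega : j < m+1)]
        have e2 : ∑ j ∈ range m, extd 0 (fwdT m q) (m+1+j)
            = ∑ j ∈ range m, extd 0 q (2+j) := by
          refine Finset.sum_congr rfl fun j hj => ?_
          have hj' := Finset.mem_range.1 hj
          rw [extd_apply _ _ (show m+1+j < 2*m+1 by omega), fwdT_coe]
          simp only [Fin.val_mk]
          rw [if_neg (by omega : ¬ m+1+j < m+1)]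
          congr 1
          omega
        rw [e1, e2]
        linear_combination -hsum
  · -- backward membership
    rintro ⟨a, b, t⟩ hx
    simp only [Finset.mem_sigma] at hx
    obtain ⟨ha, hb, ht⟩ := hx
    simp only [imdSet, Finset.mem_filter, Finset.mem_univ, true_and] at ht ⊢
    obtain ⟨htD, htsum⟩ := ht
    rw [finIf_split'_sum, finIf_split'_sum] at htsum
    simp only [extd_const, Finset.sum_const_zero, add_zero, zero_add] at htsum
    constructor
    · intro i
      have hi := i.isLt
      rw [bwdQ_coe]
      split_ifs with h0 h1 h2
      · exact ha
      · exact hb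
      · rw [extd_apply _ _ (show m+1+((i:ℕ)-2) < 2*m+1 by omega)]; exact htD _
      · rw [extd_apply _ _ (show (i:ℕ)-(m+1+1) < 2*m+1 by omega)]; exact htD _
    · rw [finIf_split_sum, finIf_split_sum]
      simp only [extd_const, Finset.sum_const_zero, add_zero, zero_add]
      rw [bwd_zero, bwd_one]
      have e1 : ∑ i ∈ range m, extd 0 (bwdQ m a b t) (2+i)
          = ∑ i ∈ range m, extd 0 t (m+1+i) := by
        refine Finset.sum_congr rfl fun i hi => ?_
        have hi' := Finset.mem_range.1 hi
        rw [extd_apply _ _ (show 2+i < 2*(m+1)+1 by omega), bwdQ_coe]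
        simp only [Fin.val_mk]
        rw [if_neg (by omega), if_neg (by omega), if_pos (by omega)]
        congr 1
        omega
      have e2 : ∑ i ∈ range (m+1), extd 0 (bwdQ m a b t) (m+1+1+i)
          = ∑ i ∈ range (m+1), extd 0 t i := by
        refine Finset.sum_congr rfl fun i hi => ?_
        have hi' := Finset.mem_range.1 hi
        rw [extd_apply _ _ (show m+1+1+i < 2*(m+1)+1 by omega), bwdQ_coe]
        simp only [Fin.val_mk]
        rw [if_neg (by omega), if_neg (by omega), if_neg (by omega)]
        congr 1
        omega
      rw [e1, e2]
      linear_combination -htsum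
  · -- left inverse
    intro q _
    exact bwd_fwd m q
  · -- right inverse
    rintro ⟨a, b, t⟩ _
    simp only [bwd_zero, bwd_one, fwd_bwd]
  · -- values agree
    intro q hq
    rw [finIf_split_prod, finIf_split'_prod]
    have h0 : extd 1 (fun i : Fin (2*(m+1)+1) => X (q i)) 0 = X (extd 0 q 0) := by
      rw [extd_apply _ _ (show 0 < 2*(m+1)+1 by omega),
        extd_apply _ _ (show 0 < 2*(m+1)+1 by omega)]
    have h1 : extd 1 (fun i : Fin (2*(m+1)+1) => X (q i)) 1 = X (extd 0 q 1) := by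
      rw [extd_apply _ _ (show 1 < 2*(m+1)+1 by omega),
        extd_apply _ _ (show 1 < 2*(m+1)+1 by omega)]
    have h2 : ∏ i ∈ range m, extd 1 (fun i : Fin (2*(m+1)+1) => X (q i)) (2+i)
        = ∏ j ∈ range m, extd 1 (fun j : Fin (2*m+1) => X (fwdT m q j)) (m+1+j) := by
      refine Finset.prod_congr rfl fun i hi => ?_
      have hi' := Finset.mem_range.1 hi
      rw [extd_apply _ _ (show 2+i < 2*(m+1)+1 by omega),
        extd_apply _ _ (show m+1+i < 2*m+1 by omega), fwdT_coe]
      simp only [Fin.val_mk]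
      rw [if_neg (by omega : ¬ m+1+i < m+1),
        extd_apply _ _ (show 2+((m+1+i)-(m+1)) < 2*(m+1)+1 by omega)]
      congr 2
      simp only [Fin.mk.injEq]
      omega
    have h3 : ∏ i ∈ range (m+1),
          extd 1 (fun i : Fin (2*(m+1)+1) => (starRingEnd ℂ) (X (q i))) (m+1+1+i)
        = ∏ j ∈ range (m+1),
            extd 1 (fun j : Fin (2*m+1) => (starRingEnd ℂ) (X (fwdT m q j))) j := by
      refine Finset.prod_congr rfl fun i hi => ?_
      have hi' := Finset.mem_range.1 hi
      rw [extd_apply _ _ (show m+1+1+i < 2*(m+1)+1 by omega),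
        extd_apply _ _ (show i < 2*m+1 by omega), fwdT_coe]
      simp only [Fin.val_mk]
      rw [if_pos (by omega : i < m+1),
        extd_apply _ _ (show m+1+1+i < 2*(m+1)+1 by omega)]
    rw [h0, h1, h2, h3]
    ring
end

section
/- (Theorem 1, cyclic version.) Let P be a positive integer and D ⊆ ZMod P. For s ∈ ZMod P let Λ_D(s) be the number of pairs (q_1, q_2) ∈ D² with q_1 + q_2 = s. Then for every integer k ≥ 1 and every p ∈ ZMod P, the cardinality of the IMD index set satisfies |Q_{2k+1}(D, p)| = Σ_{ρ ∈ ZMod P} Λ_D(p + ρ) · |Q_{2k−1}(D, ρ)|. -/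
open Finset

/-- `Λ_D(s)`: the number of pairs `(q₁, q₂) ∈ D²` with `q₁ + q₂ = s`. -/
def lambdaD (P : ℕ) [NeZero P] (D : Finset (ZMod P)) (s : ZMod P) : ℕ :=
  ((D ×ˢ D).filter fun qq => qq.1 + qq.2 = s).card

section Aux
variable {P : ℕ} [NeZero P]
set_option linter.unusedSectionVars false

lemma fin_sum_to_range (n : ℕ) (f : Fin n → ZMod P) :
    ∑ i : Fin n, f i = ∑ j ∈ range n, (if h : j < n then f ⟨j, h⟩ else 0) := by
  rw [← Fin.sum_univ_eq_sum_range (fun j => if h : j < n then f ⟨j, h⟩ else 0) n]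
  exact Finset.sum_congr rfl fun i _ => by simp [i.isLt]

lemma sum_range_split {n : ℕ} (a b : ℕ) (h : n = a + b) (f : ℕ → ZMod P) :
    ∑ j ∈ range n, f j = ∑ j ∈ range a, f j + ∑ j ∈ range b, f (a + j) := by
  subst h; exact Finset.sum_range_add f a b

def Qf (m : ℕ) (q : Fin (2*(m+1)+1) → ZMod P) (j : ℕ) : ZMod P :=
  if h : j < 2*(m+1)+1 then q ⟨j, h⟩ else 0

def shrink (m : ℕ) (q : Fin (2*(m+1)+1) → ZMod P) : Fin (2*m+1) → ZMod P :=
  fun i => if h : (i:ℕ) < m+1 then q ⟨m+2+(i:ℕ), by omega⟩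
    else q ⟨(i:ℕ) - m, by have := i.isLt; omega⟩

def grow (m : ℕ) (a b : ZMod P) (r : Fin (2*m+1) → ZMod P) : Fin (2*(m+1)+1) → ZMod P :=
  fun i => if (i:ℕ) = 0 then a
    else if h : (i:ℕ) < m+1 then r ⟨(i:ℕ)+m, by omega⟩
    else if (i:ℕ) = m+1 then b
    else r ⟨(i:ℕ)-(m+2), by have := i.isLt; omega⟩

/-- The signed sum of a `(2m+1)`-tuple. -/
def sig (m : ℕ) (r : Fin (2*m+1) → ZMod P) : ZMod P :=
  (∑ i : Fin (2*m+1), if (i:ℕ) < m+1 then r i else 0) -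
    ∑ i : Fin (2*m+1), if (i:ℕ) < m+1 then 0 else r i

lemma bigplus (m : ℕ) (q : Fin (2*(m+1)+1) → ZMod P) :
    (∑ i : Fin (2*(m+1)+1), if (i:ℕ) < (m+1)+1 then q i else 0)
      = Qf m q 0 + (∑ j ∈ range m, Qf m q (j+1)) + Qf m q (m+1) := by
  rw [fin_sum_to_range]
  rw [sum_range_split (m+2) (m+1) (by omega)]
  have h1 : ∑ j ∈ range (m+2),
      (if h : j < 2*(m+1)+1 then (if ((⟨j,h⟩ : Fin (2*(m+1)+1)) : ℕ) < (m+1)+1 then q ⟨j,h⟩ else 0) else 0)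
      = ∑ j ∈ range (m+2), Qf m q j := by
    refine Finset.sum_congr rfl fun j hj => ?_
    rw [Finset.mem_range] at hj
    rw [dif_pos (by omega : j < 2*(m+1)+1), if_pos (by omega : j < (m+1)+1), Qf, dif_pos]
  have h2 : ∑ j ∈ range (m+1),
      (if h : (m+2)+j < 2*(m+1)+1 then (if (((⟨(m+2)+j,h⟩ : Fin (2*(m+1)+1))) : ℕ) < (m+1)+1 then q ⟨(m+2)+j,h⟩ else 0) else 0)
      = 0 := by
    refine Finset.sum_eq_zero fun j hj => ?_
    rw [Finset.mem_range] at hj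
    rw [dif_pos (by omega : (m+2)+j < 2*(m+1)+1), if_neg (by simp only [Fin.val_mk]; omega)]
  rw [h1, h2, add_zero, Finset.sum_range_succ, Finset.sum_range_succ']
  ring

lemma bigminus (m : ℕ) (q : Fin (2*(m+1)+1) → ZMod P) :
    (∑ i : Fin (2*(m+1)+1), if (i:ℕ) < (m+1)+1 then 0 else q i)
      = ∑ j ∈ range (m+1), Qf m q ((m+2)+j) := by
  rw [fin_sum_to_range]
  rw [sum_range_split (m+2) (m+1) (by omega)]
  have h1 : ∑ j ∈ range (m+2),
      (if h : j < 2*(m+1)+1 then (if ((⟨j,h⟩ : Fin (2*(m+1)+1)) : ℕ) < (m+1)+1 then 0 else q ⟨j,h⟩) else 0)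
      = 0 := by
    refine Finset.sum_eq_zero fun j hj => ?_
    rw [Finset.mem_range] at hj
    rw [dif_pos (by omega : j < 2*(m+1)+1), if_pos (by simp only [Fin.val_mk]; omega)]
  have h2 : ∑ j ∈ range (m+1),
      (if h : (m+2)+j < 2*(m+1)+1 then (if (((⟨(m+2)+j,h⟩ : Fin (2*(m+1)+1))) : ℕ) < (m+1)+1 then 0 else q ⟨(m+2)+j,h⟩) else 0)
      = ∑ j ∈ range (m+1), Qf m q ((m+2)+j) := by
    refine Finset.sum_congr rfl fun j hj => ?_
    rw [Finset.mem_range] at hj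
    rw [dif_pos (by omega : (m+2)+j < 2*(m+1)+1), if_neg (by simp only [Fin.val_mk]; omega), Qf, dif_pos]
  rw [h1, h2, zero_add]

lemma smallplus (m : ℕ) (q : Fin (2*(m+1)+1) → ZMod P) :
    (∑ i : Fin (2*m+1), if (i:ℕ) < m+1 then shrink m q i else 0)
      = ∑ j ∈ range (m+1), Qf m q ((m+2)+j) := by
  rw [fin_sum_to_range]
  rw [sum_range_split (m+1) m (by omega)]
  have h1 : ∑ j ∈ range (m+1),
      (if h : j < 2*m+1 then (if ((⟨j,h⟩ : Fin (2*m+1)) : ℕ) < m+1 then shrink m q ⟨j,h⟩ else 0) else 0)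
      = ∑ j ∈ range (m+1), Qf m q ((m+2)+j) := by
    refine Finset.sum_congr rfl fun j hj => ?_
    rw [Finset.mem_range] at hj
    rw [dif_pos (by omega : j < 2*m+1), if_pos (by simp only [Fin.val_mk]; omega)]
    rw [shrink]
    simp only [Fin.val_mk]
    rw [dif_pos (by omega : j < m+1), Qf, dif_pos]
  have h2 : ∑ j ∈ range m,
      (if h : (m+1)+j < 2*m+1 then (if ((⟨(m+1)+j,h⟩ : Fin (2*m+1)) : ℕ) < m+1 then shrink m q ⟨(m+1)+j,h⟩ else 0) else 0)
      = 0 := by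
    refine Finset.sum_eq_zero fun j hj => ?_
    rw [Finset.mem_range] at hj
    rw [dif_pos (by omega : (m+1)+j < 2*m+1), if_neg (by simp only [Fin.val_mk]; omega)]
  rw [h1, h2, add_zero]

lemma smallminus (m : ℕ) (q : Fin (2*(m+1)+1) → ZMod P) :
    (∑ i : Fin (2*m+1), if (i:ℕ) < m+1 then 0 else shrink m q i)
      = ∑ j ∈ range m, Qf m q (j+1) := by
  rw [fin_sum_to_range]
  rw [sum_range_split (m+1) m (by omega)]
  have h1 : ∑ j ∈ range (m+1),
      (if h : j < 2*m+1 then (if ((⟨j,h⟩ : Fin (2*m+1)) : ℕ) < m+1 then 0 else shrink m q ⟨j,h⟩) else 0)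
      = 0 := by
    refine Finset.sum_eq_zero fun j hj => ?_
    rw [Finset.mem_range] at hj
    rw [dif_pos (by omega : j < 2*m+1), if_pos (by simp only [Fin.val_mk]; omega)]
  have h2 : ∑ j ∈ range m,
      (if h : (m+1)+j < 2*m+1 then (if ((⟨(m+1)+j,h⟩ : Fin (2*m+1)) : ℕ) < m+1 then 0 else shrink m q ⟨(m+1)+j,h⟩) else 0)
      = ∑ j ∈ range m, Qf m q (j+1) := by
    refine Finset.sum_congr rfl fun j hj => ?_
    rw [Finset.mem_range] at hj
    rw [dif_pos (by omega : (m+1)+j < 2*m+1), if_neg (by simp only [Fin.val_mk]; omega)]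
    rw [shrink]
    simp only [Fin.val_mk]
    rw [dif_neg (by omega : ¬ (m+1)+j < m+1)]
    have : (⟨(m+1)+j - m, by omega⟩ : Fin (2*(m+1)+1)) = ⟨j+1, by omega⟩ :=
      Fin.ext (by simp only [Fin.val_mk]; omega)
    rw [this, Qf, dif_pos]
  rw [h1, h2, zero_add]

lemma key (m : ℕ) (q : Fin (2*(m+1)+1) → ZMod P) :
    sig (m+1) q
    = q ⟨0, by omega⟩ + q ⟨m+1, by omega⟩ - sig m (shrink m q) := by
  rw [sig, sig, bigplus, bigminus, smallplus, smallminus]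
  have h0 : Qf m q 0 = q ⟨0, by omega⟩ := by rw [Qf, dif_pos]
  have h1 : Qf m q (m+1) = q ⟨m+1, by omega⟩ := by rw [Qf, dif_pos]
  rw [h0, h1]; ring

lemma shrink_grow (m : ℕ) (a b : ZMod P) (r : Fin (2*m+1) → ZMod P) :
    shrink m (grow m a b r) = r := by
  funext i
  have hi := i.isLt
  rw [shrink]
  by_cases h : (i:ℕ) < m+1
  · rw [dif_pos h, grow]
    simp only [Fin.val_mk]
    rw [if_neg (by omega), dif_neg (by omega), if_neg (by omega)]
    congr 1; exact Fin.ext (by simp only [Fin.val_mk]; omega)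
  · rw [dif_neg h, grow]
    simp only [Fin.val_mk]
    rw [if_neg (by omega), dif_pos (by omega : (i:ℕ) - m < m+1)]
    congr 1; exact Fin.ext (by simp only [Fin.val_mk]; omega)

lemma grow_shrink (m : ℕ) (q : Fin (2*(m+1)+1) → ZMod P) :
    grow m (q ⟨0, by omega⟩) (q ⟨m+1, by omega⟩) (shrink m q) = q := by
  funext i
  have hi := i.isLt
  rw [grow]
  by_cases h0 : (i:ℕ) = 0
  · rw [if_pos h0]; congr 1; exact Fin.ext (by simp only [Fin.val_mk]; omega)
  rw [if_neg h0]
  by_cases h1 : (i:ℕ) < m+1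
  · rw [dif_pos h1, shrink]
    simp only [Fin.val_mk]
    rw [dif_neg (by omega)]
    congr 1; exact Fin.ext (by simp only [Fin.val_mk]; omega)
  rw [dif_neg h1]
  by_cases h2 : (i:ℕ) = m+1
  · rw [if_pos h2]; congr 1; exact Fin.ext (by simp only [Fin.val_mk]; omega)
  · rw [if_neg h2, shrink]
    simp only [Fin.val_mk]
    rw [dif_pos (by omega : (i:ℕ)-(m+2) < m+1)]
    congr 1; exact Fin.ext (by simp only [Fin.val_mk]; omega)

lemma grow_zero (m : ℕ) (a b : ZMod P) (r : Fin (2*m+1) → ZMod P) :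
    grow m a b r ⟨0, by omega⟩ = a := by
  simp [grow]

lemma grow_mid (m : ℕ) (a b : ZMod P) (r : Fin (2*m+1) → ZMod P) :
    grow m a b r ⟨m+1, by omega⟩ = b := by
  simp [grow]

lemma mem_imdSet {D : Finset (ZMod P)} {k : ℕ} {p : ZMod P} {q : Fin (2*k+1) → ZMod P} :
    q ∈ imdSet P D k p ↔ (∀ i, q i ∈ D) ∧ sig k q = p := by
  simp [imdSet, sig]

end Aux

/-- Theorem 1, cyclic version:
`|Q_{2k+1}(D, p)| = Σ_{ρ ∈ ZMod P} Λ_D(p + ρ) · |Q_{2k−1}(D, ρ)|` for `k ≥ 1`. -/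
theorem imdSet_card_recursion (P : ℕ) [NeZero P] (D : Finset (ZMod P))
    (k : ℕ) (hk : 1 ≤ k) (p : ZMod P) :
    (imdSet P D k p).card =
      ∑ ρ : ZMod P, lambdaD P D (p + ρ) * (imdSet P D (k - 1) ρ).card := by
  obtain ⟨m, rfl⟩ : ∃ m, k = m + 1 := ⟨k - 1, by omega⟩
  show (imdSet P D (m+1) p).card = ∑ ρ : ZMod P, lambdaD P D (p + ρ) * (imdSet P D m ρ).card
  have hRT : ((univ : Finset (ZMod P)).sigma fun ρ =>
        ((D ×ˢ D).filter fun qq => qq.1 + qq.2 = p + ρ) ×ˢ imdSet P D m ρ).card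
      = ∑ ρ : ZMod P, lambdaD P D (p + ρ) * (imdSet P D m ρ).card := by
    rw [Finset.card_sigma]
    exact Finset.sum_congr rfl fun ρ _ => by rw [Finset.card_product, lambdaD]
  rw [← hRT]
  refine Finset.card_bij'
    (fun q _ => ⟨sig m (shrink m q), ((q ⟨0, by omega⟩, q ⟨m+1, by omega⟩), shrink m q)⟩)
    (fun x _ => grow m x.2.1.1 x.2.1.2 x.2.2) ?_ ?_ ?_ ?_
  · intro q hq
    rw [mem_imdSet] at hq
    obtain ⟨hD, hsum⟩ := hq
    have hkey := key (P := P) m q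
    rw [hsum] at hkey
    rw [Finset.mem_sigma]
    refine ⟨Finset.mem_univ _, ?_⟩
    rw [Finset.mem_product]
    constructor
    · rw [Finset.mem_filter, Finset.mem_product]
      exact ⟨⟨hD _, hD _⟩, by rw [hkey]; ring⟩
    · rw [mem_imdSet]
      refine ⟨fun i => ?_, rfl⟩
      simp only [shrink]
      split <;> exact hD _
  · intro x hx
    rw [Finset.mem_sigma, Finset.mem_product, Finset.mem_filter, Finset.mem_product] at hx
    obtain ⟨-, ⟨⟨ha, hb⟩, hab⟩, hr⟩ := hx
    rw [mem_imdSet] at hr ⊢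
    constructor
    · intro i
      simp only [grow]
      split
      · exact ha
      split
      · exact hr.1 _
      split
      · exact hb
      · exact hr.1 _
    · have hkey := key (P := P) m (grow m x.2.1.1 x.2.1.2 x.2.2)
      rw [shrink_grow, grow_zero, grow_mid, hr.2] at hkey
      rw [hkey, hab]
      ring
  · intro q hq
    exact grow_shrink m q
  · intro x hx
    rw [Finset.mem_sigma, Finset.mem_product, Finset.mem_filter, Finset.mem_product] at hx
    obtain ⟨-, -, hr⟩ := hx
    rw [mem_imdSet] at hr
    obtain ⟨ρ, ⟨⟨a, b⟩, r⟩⟩ := x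
    dsimp only at hr ⊢
    rw [shrink_grow, hr.2, grow_zero, grow_mid]
end

section
/- (Zero mean of odd-order nonlinear bases.) Let P be a positive integer, D ⊆ ZMod P a finite index set, and (Ω, μ) a probability space. Let X : ZMod P → Ω → ℂ be such that each X[q] is measurable and almost surely bounded, the family (X[q])_{q ∈ D} is independent, and each X[q] with q ∈ D is circularly symmetric (for every θ ∈ ℝ, exp(iθ)·X[q] has the same law as X[q]). For k ≥ 0 and p ∈ ZMod P define the random variable S_{2k+1}[p] = Σ_{(q_1,…,q_{2k+1}) ∈ Q_{2k+1}(D,p)} ∏_{i=1}^{k+1} X[q_i] · ∏_{j=k+2}^{2k+1} conj(X[q_j]). Then E[ S_{2k+1}[p] ] = 0 for every k ≥ 0 and every p ∈ ZMod P. -/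
open Finset MeasureTheory ProbabilityTheory Complex

/-- The random `(2k+1)`-th IMD nonlinear basis
`S_{2k+1}[p](ω) = Σ_{(q_1,…,q_{2k+1}) ∈ Q_{2k+1}(D,p)} ∏_{i≤k+1} X[q_i](ω) ∏_{j>k+1} conj(X[q_j](ω))`. -/
noncomputable def imdBasisRV {Ω : Type*} (P : ℕ) [NeZero P] (D : Finset (ZMod P))
    (X : ZMod P → Ω → ℂ) (k : ℕ) (p : ZMod P) (ω : Ω) : ℂ :=
  ∑ q ∈ imdSet P D k p, ∏ i : Fin (2 * k + 1),
    if (i : ℕ) < k + 1 then X (q i) ω else (starRingEnd ℂ) (X (q i) ω)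


section Aux
set_option linter.unusedSectionVars false
variable {Ω : Type*} [MeasurableSpace Ω] {μ : Measure Ω}


lemma my_integral_mul_of_indepFun {X Y : Ω → ℂ} (h : IndepFun X Y μ)
    (hX : Integrable X μ) (hY : Integrable Y μ) :
    ∫ ω, X ω * Y ω ∂μ = (∫ ω, X ω ∂μ) * ∫ ω, Y ω ∂μ := by
  have mre : Measurable Complex.re := Complex.measurable_re
  have mim : Measurable Complex.im := Complex.measurable_im
  have iXr : Integrable (fun ω => (X ω).re) μ := hX.re
  have iXi : Integrable (fun ω => (X ω).im) μ := hX.im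
  have iYr : Integrable (fun ω => (Y ω).re) μ := hY.re
  have iYi : Integrable (fun ω => (Y ω).im) μ := hY.im
  have hrr : IndepFun (fun ω => (X ω).re) (fun ω => (Y ω).re) μ := h.comp mre mre
  have hri : IndepFun (fun ω => (X ω).re) (fun ω => (Y ω).im) μ := h.comp mre mim
  have hir : IndepFun (fun ω => (X ω).im) (fun ω => (Y ω).re) μ := h.comp mim mre
  have hii : IndepFun (fun ω => (X ω).im) (fun ω => (Y ω).im) μ := h.comp mim mim
  have prr : Integrable (fun ω => (X ω).re * (Y ω).re) μ := hrr.integrable_mul iXr iYr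
  have pri : Integrable (fun ω => (X ω).re * (Y ω).im) μ := hri.integrable_mul iXr iYi
  have pir : Integrable (fun ω => (X ω).im * (Y ω).re) μ := hir.integrable_mul iXi iYr
  have pii : Integrable (fun ω => (X ω).im * (Y ω).im) μ := hii.integrable_mul iXi iYi
  have e_rr : ∫ ω, (X ω).re * (Y ω).re ∂μ = (∫ ω, (X ω).re ∂μ) * ∫ ω, (Y ω).re ∂μ :=
    hrr.integral_fun_mul_eq_mul_integral iXr.1 iYr.1
  have e_ri : ∫ ω, (X ω).re * (Y ω).im ∂μ = (∫ ω, (X ω).re ∂μ) * ∫ ω, (Y ω).im ∂μ :=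
    hri.integral_fun_mul_eq_mul_integral iXr.1 iYi.1
  have e_ir : ∫ ω, (X ω).im * (Y ω).re ∂μ = (∫ ω, (X ω).im ∂μ) * ∫ ω, (Y ω).re ∂μ :=
    hir.integral_fun_mul_eq_mul_integral iXi.1 iYr.1
  have e_ii : ∫ ω, (X ω).im * (Y ω).im ∂μ = (∫ ω, (X ω).im ∂μ) * ∫ ω, (Y ω).im ∂μ :=
    hii.integral_fun_mul_eq_mul_integral iXi.1 iYi.1
  have hn : Integrable (fun ω => ‖X ω‖ * ‖Y ω‖) μ :=
    (h.comp measurable_norm measurable_norm).integrable_mul hX.norm hY.norm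
  have hXY : Integrable (fun ω => X ω * Y ω) μ :=
    hn.mono' (hX.1.mul hY.1) (Filter.Eventually.of_forall fun ω => by simp)
  have hXre : ∫ ω, (X ω).re ∂μ = (∫ ω, X ω ∂μ).re := integral_re hX
  have hXim : ∫ ω, (X ω).im ∂μ = (∫ ω, X ω ∂μ).im := integral_im hX
  have hYre : ∫ ω, (Y ω).re ∂μ = (∫ ω, Y ω ∂μ).re := integral_re hY
  have hYim : ∫ ω, (Y ω).im ∂μ = (∫ ω, Y ω ∂μ).im := integral_im hY
  apply Complex.ext
  · have : ∫ ω, (X ω * Y ω).re ∂μ = (∫ ω, X ω * Y ω ∂μ).re := integral_re hXY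
    rw [← this]
    simp only [Complex.mul_re]
    rw [integral_sub prr pii, e_rr, e_ii, hXre, hXim, hYre, hYim]
  · have : ∫ ω, (X ω * Y ω).im ∂μ = (∫ ω, X ω * Y ω ∂μ).im := integral_im hXY
    rw [← this]
    simp only [Complex.mul_im]
    rw [integral_add pri pir, e_ri, e_ir, hXre, hXim, hYre, hYim]


lemma my_circ_moment_zero [IsProbabilityMeasure μ] {X : Ω → ℂ} (hm : Measurable X)
    (hcirc : ∀ θ : ℝ, Measure.map (fun ω => Complex.exp (θ * Complex.I) * X ω) μ
      = Measure.map X μ)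
    {a b : ℕ} (hab : a ≠ b) :
    ∫ ω, (X ω) ^ a * (starRingEnd ℂ) (X ω) ^ b ∂μ = 0 := by
  set m : ℤ := (a : ℤ) - b with hmdef
  have hmZ : m ≠ 0 := sub_ne_zero.2 (fun h => hab (by exact_mod_cast h))
  have hm0 : (m : ℝ) ≠ 0 := Int.cast_ne_zero.2 hmZ
  set θ : ℝ := Real.pi / m with hθ
  set c : ℂ := Complex.exp (θ * Complex.I) with hc
  have hFc : Continuous fun z : ℂ => z ^ a * (starRingEnd ℂ) z ^ b := by
    continuity
  have key : c ^ a * (starRingEnd ℂ) c ^ b = -1 := by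
    rw [hc, ← Complex.exp_conj]
    rw [← Complex.exp_nat_mul, ← Complex.exp_nat_mul, ← Complex.exp_add]
    have : (a : ℂ) * (θ * Complex.I) + (b : ℂ) * (starRingEnd ℂ) (θ * Complex.I)
        = (Real.pi : ℂ) * Complex.I := by
      simp only [map_mul, Complex.conj_ofReal, Complex.conj_I]
      have : ((a : ℂ) - b) * θ = (Real.pi : ℂ) := by
        have h3 : ((m : ℝ) * θ : ℝ) = Real.pi := by
          rw [hθ]; field_simp
        have h4 := congrArg (Complex.ofReal) h3
        push_cast [hmdef] at h4
        linear_combination h4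
      ring_nf
      ring_nf at this
      linear_combination Complex.I * this
    rw [this, Complex.exp_pi_mul_I]
  have h1 : ∫ ω, (c * X ω) ^ a * (starRingEnd ℂ) (c * X ω) ^ b ∂μ
      = ∫ ω, (X ω) ^ a * (starRingEnd ℂ) (X ω) ^ b ∂μ := by
    rw [← integral_map (f := fun z : ℂ => z ^ a * (starRingEnd ℂ) z ^ b)
        ((hm.const_mul c).aemeasurable) hFc.aestronglyMeasurable,
      hcirc θ,
      integral_map hm.aemeasurable hFc.aestronglyMeasurable]
  have h2 : ∀ ω, (c * X ω) ^ a * (starRingEnd ℂ) (c * X ω) ^ b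
      = -((X ω) ^ a * (starRingEnd ℂ) (X ω) ^ b) := by
    intro ω
    have : (c * X ω) ^ a * (starRingEnd ℂ) (c * X ω) ^ b
        = (c ^ a * (starRingEnd ℂ) c ^ b) * ((X ω) ^ a * (starRingEnd ℂ) (X ω) ^ b) := by
      simp only [map_mul, mul_pow]; ring
    rw [this, key]; ring
  simp_rw [h2, integral_neg] at h1
  linear_combination (-(1:ℂ)/2) * h1


def myACount {P : ℕ} [NeZero P] (k : ℕ) (q : Fin (2 * k + 1) → ZMod P) (d : ZMod P) : ℕ :=
  (Finset.univ.filter fun i : Fin (2 * k + 1) => q i = d ∧ (i : ℕ) < k + 1).card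

def myBCount {P : ℕ} [NeZero P] (k : ℕ) (q : Fin (2 * k + 1) → ZMod P) (d : ZMod P) : ℕ :=
  (Finset.univ.filter fun i : Fin (2 * k + 1) => q i = d ∧ ¬ (i : ℕ) < k + 1).card

lemma my_regroup {P : ℕ} [NeZero P] (D : Finset (ZMod P)) (X : ZMod P → Ω → ℂ) (k : ℕ)
    (q : Fin (2 * k + 1) → ZMod P) (hq : ∀ i, q i ∈ D) (ω : Ω) :
    (∏ i : Fin (2 * k + 1),
      if (i : ℕ) < k + 1 then X (q i) ω else (starRingEnd ℂ) (X (q i) ω))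
    = ∏ d ∈ D, (X d ω ^ myACount k q d * (starRingEnd ℂ) (X d ω) ^ myBCount k q d) := by
  classical
  rw [← Finset.prod_fiberwise_of_maps_to (g := q) (fun i _ => hq i)]
  refine Finset.prod_congr rfl fun d _ => ?_
  rw [← Finset.prod_filter_mul_prod_filter_not
    (Finset.univ.filter fun i => q i = d) (fun i => (i : ℕ) < k + 1)]
  congr 1
  · rw [Finset.filter_filter]
    rw [Finset.prod_congr rfl (fun i hi => ?_), Finset.prod_const]
    · rfl
    · simp only [Finset.mem_filter, Finset.mem_univ, true_and] at hi
      rw [if_pos hi.2, hi.1]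
  · rw [Finset.filter_filter]
    rw [Finset.prod_congr rfl (fun i hi => ?_), Finset.prod_const]
    · rfl
    · simp only [Finset.mem_filter, Finset.mem_univ, true_and] at hi
      rw [if_neg hi.2, hi.1]

lemma my_card_lt (k : ℕ) :
    (Finset.univ.filter fun i : Fin (2 * k + 1) => (i : ℕ) < k + 1).card = k + 1 := by
  rw [Finset.card_filter, Fin.sum_univ_eq_sum_range (fun i => if i < k + 1 then 1 else 0),
    ← Finset.card_filter]
  have : (Finset.range (2 * k + 1)).filter (fun i => i < k + 1) = Finset.range (k + 1) := by
    ext i; simp; omega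
  rw [this, Finset.card_range]

lemma my_sum_aCount {P : ℕ} [NeZero P] (D : Finset (ZMod P)) (k : ℕ)
    (q : Fin (2 * k + 1) → ZMod P) (hq : ∀ i, q i ∈ D) :
    ∑ d ∈ D, myACount k q d = k + 1 := by
  classical
  have h2 := Finset.card_eq_sum_card_fiberwise
    (s := Finset.univ.filter fun i : Fin (2 * k + 1) => (i : ℕ) < k + 1) (t := D) (f := q)
    (fun i _ => hq i)
  rw [my_card_lt] at h2
  rw [h2]
  refine Finset.sum_congr rfl fun d _ => ?_
  rw [Finset.filter_filter]
  unfold myACount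
  congr 1
  ext i
  simp [and_comm]

lemma my_sum_bCount {P : ℕ} [NeZero P] (D : Finset (ZMod P)) (k : ℕ)
    (q : Fin (2 * k + 1) → ZMod P) (hq : ∀ i, q i ∈ D) :
    ∑ d ∈ D, myBCount k q d = k := by
  classical
  have h1 : (Finset.univ.filter fun i : Fin (2 * k + 1) => ¬ (i : ℕ) < k + 1).card = k := by
    have := Finset.card_filter_add_card_filter_not
      (s := (Finset.univ : Finset (Fin (2 * k + 1)))) (p := fun i => (i : ℕ) < k + 1)
    rw [my_card_lt] at this
    simp only [Finset.card_univ, Fintype.card_fin] at this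
    omega
  have h2 := Finset.card_eq_sum_card_fiberwise
    (s := Finset.univ.filter fun i : Fin (2 * k + 1) => ¬ (i : ℕ) < k + 1) (t := D) (f := q)
    (fun i _ => hq i)
  rw [h1] at h2
  have h3 : ∑ d ∈ D, myBCount k q d
      = ∑ b ∈ D, ((Finset.univ.filter fun i : Fin (2*k+1) => ¬ (i:ℕ) < k+1).filter
        fun a => q a = b).card := by
    refine Finset.sum_congr rfl fun d _ => ?_
    rw [Finset.filter_filter]
    unfold myBCount
    congr 1
    ext i
    simp [and_comm]
  exact h3.trans h2.symm


lemma my_integrable_prod [IsProbabilityMeasure μ] {ι : Type*} [Fintype ι] (Y : ι → Ω → ℂ)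
    (hm : ∀ i, Measurable (Y i)) (hb : ∀ i, ∃ C : ℝ, ∀ᵐ ω ∂μ, ‖Y i ω‖ ≤ C)
    (s : Finset ι) : Integrable (fun ω => ∏ i ∈ s, Y i ω) μ := by
  choose C hC using hb
  have hae : ∀ᵐ ω ∂μ, ∀ i, ‖Y i ω‖ ≤ max (C i) 0 := by
    rw [ae_all_iff]
    exact fun i => (hC i).mono fun ω h => h.trans (le_max_left _ _)
  refine (integrable_const (∏ i ∈ s, max (C i) 0)).mono'
    ((Finset.measurable_prod s fun i _ => hm i).aestronglyMeasurable) ?_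
  filter_upwards [hae] with ω h
  calc ‖∏ i ∈ s, Y i ω‖ = ∏ i ∈ s, ‖Y i ω‖ := by rw [norm_prod]
    _ ≤ ∏ i ∈ s, max (C i) 0 :=
      Finset.prod_le_prod (fun i _ => norm_nonneg _) (fun i _ => h i)


lemma my_monomial_zero (μ : Measure Ω) [IsProbabilityMeasure μ] {P : ℕ} [NeZero P]
    (D : Finset (ZMod P)) (X : ZMod P → Ω → ℂ)
    (hmeas : ∀ q : ZMod P, Measurable (X q))
    (hbdd : ∀ q : ZMod P, ∃ C : ℝ, ∀ᵐ ω ∂μ, ‖X q ω‖ ≤ C)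
    (hindep : iIndepFun
      (fun q : {x // x ∈ D} => X q.1) μ)
    (hcirc : ∀ q ∈ D, ∀ θ : ℝ,
      Measure.map (fun ω => Complex.exp (θ * Complex.I) * X q ω) μ = Measure.map (X q) μ)
    (a b : ZMod P → ℕ) (hsum : (∑ d ∈ D, ((a d : ℤ) - b d)) ≠ 0) :
    ∫ ω, ∏ d ∈ D, (X d ω ^ a d * (starRingEnd ℂ) (X d ω) ^ b d) ∂μ = 0 := by
  classical
  obtain ⟨d0, hd0D, hd0⟩ : ∃ d0 ∈ D, a d0 ≠ b d0 := by
    by_contra h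
    push_neg at h
    exact hsum (Finset.sum_eq_zero fun d hd => by rw [h d hd]; ring)
  set g : {x // x ∈ D} → Ω → ℂ :=
    fun d ω => X d.1 ω ^ a d.1 * (starRingEnd ℂ) (X d.1 ω) ^ b d.1 with hg
  have hstar : ∀ d : ZMod P, Measurable fun ω => (starRingEnd ℂ) (X d ω) := by
    intro d
    exact continuous_star.measurable.comp (hmeas d)
  have hgm : ∀ d : {x // x ∈ D}, Measurable (g d) := fun d =>
    ((hmeas d.1).pow_const _).mul ((hstar d.1).pow_const _)
  have hgb : ∀ d : {x // x ∈ D}, ∃ C : ℝ, ∀ᵐ ω ∂μ, ‖g d ω‖ ≤ C := by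
    intro d
    obtain ⟨C, hC⟩ := hbdd d.1
    refine ⟨max C 0 ^ a d.1 * max C 0 ^ b d.1, hC.mono fun ω h => ?_⟩
    have hX : ‖X d.1 ω‖ ≤ max C 0 := by
      exact h.trans (le_max_left _ _)
    have h0 : (0:ℝ) ≤ ‖X d.1 ω‖ := norm_nonneg _
    simp only [hg, norm_mul, norm_pow, RCLike.norm_conj]
    exact mul_le_mul (pow_le_pow_left₀ h0 hX _) (pow_le_pow_left₀ h0 hX _)
      (pow_nonneg h0 _) (pow_nonneg (le_trans h0 hX) _)
  have hgind : iIndepFun g μ := by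
    have := hindep.comp
      (fun d : {x // x ∈ D} => fun z : ℂ => z ^ a d.1 * (starRingEnd ℂ) z ^ b d.1)
      (fun d => (measurable_id.pow_const _).mul
        ((continuous_star.measurable).pow_const _))
    exact this
  set d0' : {x // x ∈ D} := ⟨d0, hd0D⟩ with hd0'
  have hsep : IndepFun (∏ j ∈ Finset.univ.erase d0', g j) (g d0') μ :=
    hgind.indepFun_finsetProd_of_notMem hgm (Finset.notMem_erase _ _)
  have hprodfun : (∏ j ∈ Finset.univ.erase d0', g j)
      = fun ω => ∏ j ∈ Finset.univ.erase d0', g j ω :=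
    funext fun ω => Finset.prod_apply ω _ _
  rw [hprodfun] at hsep
  have hint : ∀ s : Finset {x // x ∈ D}, Integrable (fun ω => ∏ d ∈ s, g d ω) μ :=
    my_integrable_prod g hgm hgb
  have hint1 : Integrable (g d0') μ := by simpa using hint {d0'}
  have e0 : ∫ ω, g d0' ω ∂μ = 0 :=
    my_circ_moment_zero (hmeas d0) (hcirc d0 hd0D) hd0
  have step1 : ∀ ω : Ω, ∏ d ∈ D, (X d ω ^ a d * (starRingEnd ℂ) (X d ω) ^ b d)
      = ∏ d : {x // x ∈ D}, g d ω := fun ω => by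
    rw [Finset.univ_eq_attach]
    exact (Finset.prod_attach D _).symm
  simp_rw [step1]
  have step2 : ∀ ω : Ω, ∏ d : {x // x ∈ D}, g d ω
      = g d0' ω * ∏ d ∈ Finset.univ.erase d0', g d ω := fun ω =>
    (Finset.mul_prod_erase _ _ (Finset.mem_univ d0')).symm
  simp_rw [step2]
  rw [my_integral_mul_of_indepFun hsep.symm hint1 (hint _), e0, zero_mul]


end Aux

/-- Zero mean of odd-order nonlinear bases: if the `X[q]`, `q ∈ D`, are independent,
measurable, a.s. bounded, circularly symmetric complex random variables, then
`E[S_{2k+1}[p]] = 0` for every `k ≥ 0` and every `p`. -/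
theorem imdBasisRV_integral_eq_zero {Ω : Type*} [MeasurableSpace Ω]
    (μ : Measure Ω) [IsProbabilityMeasure μ]
    (P : ℕ) [NeZero P] (D : Finset (ZMod P))
    (X : ZMod P → Ω → ℂ)
    (hmeas : ∀ q : ZMod P, Measurable (X q))
    (hbdd : ∀ q : ZMod P, ∃ C : ℝ, ∀ᵐ ω ∂μ, ‖X q ω‖ ≤ C)
    (hindep : iIndepFun
      (fun q : {x // x ∈ D} => X q.1) μ)
    (hcirc : ∀ q ∈ D, ∀ θ : ℝ,
      Measure.map (fun ω => Complex.exp (θ * Complex.I) * X q ω) μ = Measure.map (X q) μ)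
    (k : ℕ) (p : ZMod P) :
    ∫ ω, imdBasisRV P D X k p ω ∂μ = 0 := by
  classical
  unfold imdBasisRV
  have hqmem : ∀ q ∈ imdSet P D k p, ∀ i, q i ∈ D := fun q hq =>
    ((Finset.mem_filter.mp hq).2).1
  have hmono : ∀ q : Fin (2 * k + 1) → ZMod P, (∀ i, q i ∈ D) →
      (fun ω => ∏ i : Fin (2 * k + 1),
        if (i : ℕ) < k + 1 then X (q i) ω else (starRingEnd ℂ) (X (q i) ω))
      = fun ω => ∏ d ∈ D,
        (X d ω ^ myACount k q d * (starRingEnd ℂ) (X d ω) ^ myBCount k q d) :=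
    fun q hq => funext fun ω => my_regroup D X k q hq ω
  have hbddM : ∀ q : Fin (2 * k + 1) → ZMod P, ∀ d : ZMod P, ∃ C : ℝ, ∀ᵐ ω ∂μ,
      ‖X d ω ^ myACount k q d * (starRingEnd ℂ) (X d ω) ^ myBCount k q d‖ ≤ C := by
    intro q d
    obtain ⟨C, hC⟩ := hbdd d
    refine ⟨max C 0 ^ myACount k q d * max C 0 ^ myBCount k q d, hC.mono fun ω h => ?_⟩
    have hX : ‖X d ω‖ ≤ max C 0 := by
      exact h.trans (le_max_left _ _)
    have h0 : (0:ℝ) ≤ ‖X d ω‖ := norm_nonneg _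
    simp only [norm_mul, norm_pow, RCLike.norm_conj]
    exact mul_le_mul (pow_le_pow_left₀ h0 hX _) (pow_le_pow_left₀ h0 hX _)
      (pow_nonneg h0 _) (pow_nonneg (le_trans h0 hX) _)
  have hintq : ∀ q ∈ imdSet P D k p, Integrable (fun ω => ∏ i : Fin (2 * k + 1),
      if (i : ℕ) < k + 1 then X (q i) ω else (starRingEnd ℂ) (X (q i) ω)) μ := by
    intro q hq
    rw [hmono q (hqmem q hq)]
    exact my_integrable_prod
      (fun d ω => X d ω ^ myACount k q d * (starRingEnd ℂ) (X d ω) ^ myBCount k q d)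
      (fun d => ((hmeas d).pow_const _).mul
        ((continuous_star.measurable.comp (hmeas d)).pow_const _))
      (hbddM q) D
  rw [integral_finset_sum _ hintq]
  refine Finset.sum_eq_zero fun q hq => ?_
  have : (∫ ω, ∏ i : Fin (2 * k + 1),
      (if (i : ℕ) < k + 1 then X (q i) ω else (starRingEnd ℂ) (X (q i) ω)) ∂μ)
      = ∫ ω, ∏ d ∈ D,
        (X d ω ^ myACount k q d * (starRingEnd ℂ) (X d ω) ^ myBCount k q d) ∂μ := by
    rw [hmono q (hqmem q hq)]
  rw [this]
  refine my_monomial_zero μ D X hmeas hbdd hindep hcirc _ _ ?_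
  rw [Finset.sum_sub_distrib, ← Nat.cast_sum, ← Nat.cast_sum,
    my_sum_aCount D k q (hqmem q hq), my_sum_bCount D k q (hqmem q hq)]
  push_cast
  ring_nf
  omega
end
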